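/- The assignment q · (a,c) := (q a q̄, q c) maps S⁷ to S⁷ for every unit quaternion q and defines a left action of S³ on S⁷; moreover the first-row projection π : Sp(2) → S⁷ is equivariant: π(q ⋆ A) = q · π(A) for all unit quaternions q and all A ∈ Sp(2). In other words, the Gromoll–Meyer ⋆-action descends along π to the S³-action (a,c) ↦ (q a q̄, q c) on S⁷. -/

import Mathlib

/-- The Gromoll–Meyer `⋆`-action of a quaternion `q` on a 2×2 quaternionic matrix:
`q ⋆ (a c; b d) = (q a q̄, q c; q b q̄, q d)`. -/
noncomputable def gmAct (q : Quaternion ℝ) (A : Matrix (Fin 2) (Fin 2) (Quaternion ℝ)) :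
    Matrix (Fin 2) (Fin 2) (Quaternion ℝ) :=
  Matrix.of fun i j => if j = 0 then q * A i j * star q else q * A i j

/-- The induced action of a quaternion `q` on `ℍ × ℍ ⊇ S⁷`: `q · (a, c) = (q a q̄, q c)`. -/
noncomputable def s7Act (q : Quaternion ℝ) (p : Quaternion ℝ × Quaternion ℝ) :
    Quaternion ℝ × Quaternion ℝ :=
  (q * p.1 * star q, q * p.2)

/-- The assignment `q · (a,c) := (q a q̄, q c)` maps `S⁷` to `S⁷` for every
unit quaternion `q` and defines a left action of `S³` on `S⁷`; moreover the first-row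
projection `π : Sp(2) → S⁷` is equivariant: `π (q ⋆ A) = q · π A` for all unit quaternions
`q` and all `A ∈ Sp(2)`. -/
theorem gromollMeyer_descends_to_s7 :
    (∀ q : Quaternion ℝ, ‖q‖ = 1 → ∀ p : Quaternion ℝ × Quaternion ℝ,
        ‖p.1‖ ^ 2 + ‖p.2‖ ^ 2 = 1 → ‖(s7Act q p).1‖ ^ 2 + ‖(s7Act q p).2‖ ^ 2 = 1) ∧
    (∀ (q₁ q₂ : Quaternion ℝ) (p : Quaternion ℝ × Quaternion ℝ),
        s7Act (q₁ * q₂) p = s7Act q₁ (s7Act q₂ p)) ∧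
    (∀ p : Quaternion ℝ × Quaternion ℝ, s7Act 1 p = p) ∧
    (∀ q : Quaternion ℝ, ‖q‖ = 1 →
      ∀ A ∈ unitary (Matrix (Fin 2) (Fin 2) (Quaternion ℝ)),
        (gmAct q A 0 0, gmAct q A 0 1) = s7Act q (A 0 0, A 0 1)) := by
  refine ⟨?_, ?_, ?_, ?_⟩
  · intro q hq p hp
    simp only [s7Act]
    rw [norm_mul, norm_mul, norm_mul, norm_star, hq]
    simpa using hp
  · intro q₁ q₂ p
    simp [s7Act, mul_assoc]
  · intro p
    simp [s7Act]
  · intro q hq A hA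
    simp [gmAct, s7Act, Fin.one_eq_zero_iff]
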